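/- Let E be a metric space. The map Φ sending a finite countably additive signed Borel measure μ on E to the functional f ↦ ∫_E f dμ on C_b(E) is a linear isometric embedding of the space ca(E) of such measures (with the total variation norm) into the continuous dual of (C_b(E), ‖·‖_∞) with its operator norm. -/

import Mathlib

open Filter Topology MeasureTheory
open scoped NNReal ENNReal
set_option linter.unusedSectionVars false

/-- Integration of a function against a finite countably additive signed Borel measure,
via its Jordan decomposition. -/
noncomputable def intSM' {E : Type*} [MeasurableSpace E]
    (s : SignedMeasure E) (f : E → ℝ) : ℝ :=
  (∫ x, f x ∂s.toJordanDecomposition.posPart) -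
    ∫ x, f x ∂s.toJordanDecomposition.negPart

section aux

open BoundedContinuousFunction

variable {E : Type*} [MeasurableSpace E] [TopologicalSpace E] [OpensMeasurableSpace E]

/-- If `s = μ - ν` for finite measures `μ, ν`, then integrating a bounded continuous
function against `s` equals the difference of the integrals. -/
lemma intSM'_eq_of_decomp (s : SignedMeasure E) (μ ν : Measure E)
    [IsFiniteMeasure μ] [IsFiniteMeasure ν]
    (h : s = μ.toSignedMeasure - ν.toSignedMeasure) (f : E →ᵇ ℝ) :
    intSM' s ⇑f = (∫ x, f x ∂μ) - ∫ x, f x ∂ν := by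
  set p := s.toJordanDecomposition.posPart with hp
  set q := s.toJordanDecomposition.negPart with hq
  have hs : s = p.toSignedMeasure - q.toSignedMeasure := by
    conv_lhs => rw [← s.toSignedMeasure_toJordanDecomposition]
    rfl
  have hkey : p.toSignedMeasure + ν.toSignedMeasure
      = μ.toSignedMeasure + q.toSignedMeasure := by
    have h2 := hs.symm.trans h
    rwa [sub_eq_sub_iff_add_eq_add] at h2
  have hmeas : p + ν = μ + q := by
    rw [← Measure.toSignedMeasure_eq_toSignedMeasure_iff,
      Measure.toSignedMeasure_add, Measure.toSignedMeasure_add]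
    exact hkey
  have hint : (∫ x, f x ∂p) + ∫ x, f x ∂ν = (∫ x, f x ∂μ) + ∫ x, f x ∂q := by
    rw [← integral_add_measure (f.integrable p) (f.integrable ν),
      ← integral_add_measure (f.integrable μ) (f.integrable q), hmeas]
  simp only [intSM', ← hp, ← hq]
  linarith

lemma intSM'_self (s : SignedMeasure E) (f : E →ᵇ ℝ) :
    intSM' s ⇑f = (∫ x, f x ∂s.toJordanDecomposition.posPart)
      - ∫ x, f x ∂s.toJordanDecomposition.negPart := rfl

lemma signed_decomp (s : SignedMeasure E) :
    s = (s.toJordanDecomposition.posPart).toSignedMeasure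
      - (s.toJordanDecomposition.negPart).toSignedMeasure := by
  conv_lhs => rw [← s.toSignedMeasure_toJordanDecomposition]
  rfl

lemma intSM'_add (s t : SignedMeasure E) (f : E →ᵇ ℝ) :
    intSM' (s + t) ⇑f = intSM' s ⇑f + intSM' t ⇑f := by
  have hdec : s + t = (s.toJordanDecomposition.posPart + t.toJordanDecomposition.posPart).toSignedMeasure
      - (s.toJordanDecomposition.negPart + t.toJordanDecomposition.negPart).toSignedMeasure := by
    rw [Measure.toSignedMeasure_add, Measure.toSignedMeasure_add]
    conv_lhs => rw [signed_decomp s, signed_decomp t]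
    abel
  rw [intSM'_eq_of_decomp (s + t) _ _ hdec f,
    integral_add_measure (f.integrable _) (f.integrable _),
    integral_add_measure (f.integrable _) (f.integrable _),
    intSM'_self, intSM'_self]
  ring

lemma intSM'_smul_nnreal (c : ℝ≥0) (s : SignedMeasure E) (f : E →ᵇ ℝ) :
    intSM' ((c : ℝ) • s) ⇑f = (c : ℝ) * intSM' s ⇑f := by
  have h : ((c : ℝ) • s).toJordanDecomposition = c • s.toJordanDecomposition := by
    rw [MeasureTheory.SignedMeasure.toJordanDecomposition_smul_real,
      MeasureTheory.JordanDecomposition.coe_smul]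
  simp only [intSM', h, MeasureTheory.JordanDecomposition.smul_posPart,
    MeasureTheory.JordanDecomposition.smul_negPart]
  rw [show (c • s.toJordanDecomposition.posPart : Measure E)
      = (c : ℝ≥0∞) • s.toJordanDecomposition.posPart from rfl,
    show (c • s.toJordanDecomposition.negPart : Measure E)
      = (c : ℝ≥0∞) • s.toJordanDecomposition.negPart from rfl,
    integral_smul_measure, integral_smul_measure]
  simp [mul_sub]

lemma intSM'_neg (s : SignedMeasure E) (f : E →ᵇ ℝ) :
    intSM' (-s) ⇑f = -intSM' s ⇑f := by
  simp only [intSM', MeasureTheory.SignedMeasure.toJordanDecomposition_neg,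
    MeasureTheory.JordanDecomposition.neg_posPart,
    MeasureTheory.JordanDecomposition.neg_negPart]
  ring

lemma intSM'_smul (c : ℝ) (s : SignedMeasure E) (f : E →ᵇ ℝ) :
    intSM' (c • s) ⇑f = c * intSM' s ⇑f := by
  rcases le_or_gt 0 c with hc | hc
  · lift c to ℝ≥0 using hc
    exact intSM'_smul_nnreal c s f
  · have hnc : (0:ℝ) ≤ -c := by linarith
    obtain ⟨d, hd⟩ : ∃ d : ℝ≥0, (d : ℝ) = -c := ⟨⟨-c, hnc⟩, rfl⟩
    have hc' : c = -(d : ℝ) := by rw [hd]; ring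
    rw [hc', show (-(d:ℝ)) • s = -((d:ℝ) • s) by ext i hi; simp, intSM'_neg, intSM'_smul_nnreal]
    ring

/-- The coercion to `ℝ` of a bounded continuous `ℝ≥0`-valued function. -/
noncomputable def nnCoe (g : E →ᵇ ℝ≥0) : E →ᵇ ℝ :=
  BoundedContinuousFunction.ofNormedAddCommGroup (fun x => (g x : ℝ))
    (NNReal.continuous_coe.comp g.continuous) (nndist g 0)
    (fun x => by
      rw [Real.norm_eq_abs, abs_of_nonneg (g x).coe_nonneg]
      exact_mod_cast BoundedContinuousFunction.NNReal.upper_bound g x)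

@[simp] lemma nnCoe_apply (g : E →ᵇ ℝ≥0) (x : E) : nnCoe g x = (g x : ℝ) := rfl

end aux

section norm

open BoundedContinuousFunction Set

variable {E : Type*} [MetricSpace E] [MeasurableSpace E] [BorelSpace E]

lemma intSM'_abs_le (s : SignedMeasure E) (f : E →ᵇ ℝ) (hf : ‖f‖ ≤ 1) :
    |intSM' s ⇑f| ≤ (s.totalVariation Set.univ).toReal := by
  set p := s.toJordanDecomposition.posPart
  set q := s.toJordanDecomposition.negPart
  have htv : (s.totalVariation Set.univ).toReal
      = (p Set.univ).toReal + (q Set.univ).toReal := by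
    rw [MeasureTheory.SignedMeasure.totalVariation, Measure.add_apply,
      ENNReal.toReal_add (measure_ne_top _ _) (measure_ne_top _ _)]
  have h1 : ‖∫ x, f x ∂p‖ ≤ (p Set.univ).toReal * ‖f‖ := f.norm_integral_le_mul_norm p
  have h2 : ‖∫ x, f x ∂q‖ ≤ (q Set.univ).toReal * ‖f‖ := f.norm_integral_le_mul_norm q
  have hp0 : (0:ℝ) ≤ (p Set.univ).toReal := ENNReal.toReal_nonneg
  have hq0 : (0:ℝ) ≤ (q Set.univ).toReal := ENNReal.toReal_nonneg
  rw [intSM'_self, htv]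
  calc |(∫ x, f x ∂p) - ∫ x, f x ∂q| ≤ ‖∫ x, f x ∂p‖ + ‖∫ x, f x ∂q‖ := by
        rw [← Real.norm_eq_abs]; exact norm_sub_le _ _
    _ ≤ (p Set.univ).toReal * ‖f‖ + (q Set.univ).toReal * ‖f‖ := add_le_add h1 h2
    _ ≤ (p Set.univ).toReal * 1 + (q Set.univ).toReal * 1 :=
        add_le_add (mul_le_mul_of_nonneg_left hf hp0) (mul_le_mul_of_nonneg_left hf hq0)
    _ = (p Set.univ).toReal + (q Set.univ).toReal := by ring

lemma intSM'_approx (s : SignedMeasure E) {ε : ℝ} (hε : 0 < ε) :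
    ∃ f : E →ᵇ ℝ, ‖f‖ ≤ 1 ∧
      (s.totalVariation Set.univ).toReal - ε ≤ intSM' s ⇑f := by
  set p := s.toJordanDecomposition.posPart with hpdef
  set q := s.toJordanDecomposition.negPart with hqdef
  obtain ⟨u, hu_meas, hpu, hqu⟩ := s.toJordanDecomposition.mutuallySingular
  -- outer approximation of u by an open set for p
  have hpu' : p u < ENNReal.ofReal (ε/4) := by
    rw [hpu]; exact ENNReal.ofReal_pos.mpr (by linarith)
  obtain ⟨U, hUu, hU_open, hpU⟩ := Set.exists_isOpen_lt_of_lt u _ hpu'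
  have hquc : q uᶜ < ENNReal.ofReal (ε/4) := by
    rw [hqu]; exact ENNReal.ofReal_pos.mpr (by linarith)
  obtain ⟨V, hVu, hV_open, hqV⟩ := Set.exists_isOpen_lt_of_lt uᶜ _ hquc
  set F : Set E := Uᶜ with hFdef
  set G : Set E := Vᶜ with hGdef
  have hF_closed : IsClosed F := hU_open.isClosed_compl
  have hG_closed : IsClosed G := hV_open.isClosed_compl
  have hFG : Disjoint G F := by
    have hFsub : F ⊆ uᶜ := Set.compl_subset_compl.mpr hUu
    have hGsub : G ⊆ u := by
      rw [hGdef, ← compl_compl u]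
      exact Set.compl_subset_compl.mpr hVu
    exact Set.disjoint_of_subset hGsub hFsub (disjoint_compl_right)
  obtain ⟨f0, hf0G, hf0F, hf0Icc⟩ :=
    exists_continuous_zero_one_of_isClosed hG_closed hF_closed hFG
  -- define g = 2 f0 - 1
  set g : E →ᵇ ℝ := BoundedContinuousFunction.ofNormedAddCommGroup
    (fun x => 2 * f0 x - 1)
    (by continuity) 1
    (fun x => by
      have h := hf0Icc x
      rw [Real.norm_eq_abs, abs_le]
      constructor
      · show -1 ≤ 2 * f0 x - 1
        linarith [h.1]
      · show 2 * f0 x - 1 ≤ 1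
        linarith [h.2]) with hgdef
  have hg_apply : ∀ x, g x = 2 * f0 x - 1 := fun x => rfl
  have hg_norm : ‖g‖ ≤ 1 := by
    apply BoundedContinuousFunction.norm_ofNormedAddCommGroup_le _ zero_le_one
  refine ⟨g, hg_norm, ?_⟩
  have hg_bd : ∀ x, -1 ≤ g x ∧ g x ≤ 1 := by
    intro x
    have h := hf0Icc x
    rw [hg_apply]
    constructor <;> [linarith [h.1]; linarith [h.2]]
  -- lower bound for ∫ g dp
  have hFc : p Fᶜ < ENNReal.ofReal (ε/4) := by
    rwa [hFdef, compl_compl]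
  have hGc : q Gᶜ < ENNReal.ofReal (ε/4) := by
    rwa [hGdef, compl_compl]
  have hFc_meas : MeasurableSet Fᶜ := hF_closed.measurableSet.compl
  have hGc_meas : MeasurableSet Gᶜ := hG_closed.measurableSet.compl
  have hFcr : (p Fᶜ).toReal < ε/4 := ENNReal.toReal_lt_of_lt_ofReal hFc
  have hGcr : (q Gᶜ).toReal < ε/4 := ENNReal.toReal_lt_of_lt_ofReal hGc
  have hint_p : (p Set.univ).toReal - 2 * (p Fᶜ).toReal ≤ ∫ x, g x ∂p := by
    have hmono : ∫ x, (1 - g x) ∂p ≤ ∫ x, Fᶜ.indicator (fun _ => (2:ℝ)) x ∂p := by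
      apply integral_mono
      · exact (integrable_const 1).sub (g.integrable p)
      · exact (integrable_const (2:ℝ)).indicator hFc_meas
      · intro x
        beta_reduce
        by_cases hx : x ∈ F
        · have hfx : f0 x = 1 := hf0F hx
          have h0 : (1:ℝ) - g x = 0 := by rw [hg_apply, hfx]; ring
          rw [h0]
          exact Set.indicator_nonneg (fun _ _ => by norm_num) x
        · have hx' : x ∈ Fᶜ := hx
          simp only [Set.indicator_of_mem hx']
          linarith [(hg_bd x).1]
    rw [MeasureTheory.integral_indicator_const (2:ℝ) hFc_meas] at hmono
    rw [integral_sub (integrable_const 1) (g.integrable p), integral_const] at hmono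
    simp only [smul_eq_mul, mul_one, measureReal_def] at hmono ⊢
    linarith
  have hint_q : ∫ x, g x ∂q ≤ -(q Set.univ).toReal + 2 * (q Gᶜ).toReal := by
    have hmono : ∫ x, (g x + 1) ∂q ≤ ∫ x, Gᶜ.indicator (fun _ => (2:ℝ)) x ∂q := by
      apply integral_mono
      · exact (g.integrable q).add (integrable_const 1)
      · exact (integrable_const (2:ℝ)).indicator hGc_meas
      · intro x
        beta_reduce
        by_cases hx : x ∈ G
        · have hfx : f0 x = 0 := hf0G hx
          have h0 : g x + 1 = 0 := by rw [hg_apply, hfx]; ring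
          rw [h0]
          exact Set.indicator_nonneg (fun _ _ => by norm_num) x
        · have hx' : x ∈ Gᶜ := hx
          simp only [Set.indicator_of_mem hx']
          linarith [(hg_bd x).2]
    rw [MeasureTheory.integral_indicator_const (2:ℝ) hGc_meas] at hmono
    rw [integral_add (g.integrable q) (integrable_const 1), integral_const] at hmono
    simp only [smul_eq_mul, mul_one, measureReal_def] at hmono ⊢
    linarith
  have htv : (s.totalVariation Set.univ).toReal
      = (p Set.univ).toReal + (q Set.univ).toReal := by
    rw [MeasureTheory.SignedMeasure.totalVariation, Measure.add_apply,
      ENNReal.toReal_add (measure_ne_top _ _) (measure_ne_top _ _)]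
  rw [intSM'_self, htv]
  linarith

end norm

/-- The map Φ sending a finite countably additive signed Borel measure μ to
the functional f ↦ ∫ f dμ on C_b(E) is a linear isometric embedding of ca(E) (with the
total variation norm) into the dual of (C_b(E), ‖·‖_∞): it is additive, homogeneous,
injective, and the operator norm of Φ μ equals the total variation of μ. -/
theorem stmt8 {E : Type*} [MetricSpace E] [MeasurableSpace E] [BorelSpace E] :
    (∀ s t : SignedMeasure E, ∀ f : BoundedContinuousFunction E ℝ,
      intSM' (s + t) ⇑f = intSM' s ⇑f + intSM' t ⇑f) ∧
    (∀ (c : ℝ) (s : SignedMeasure E) (f : BoundedContinuousFunction E ℝ),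
      intSM' (c • s) ⇑f = c * intSM' s ⇑f) ∧
    (∀ s t : SignedMeasure E,
      (∀ f : BoundedContinuousFunction E ℝ, intSM' s ⇑f = intSM' t ⇑f) → s = t) ∧
    (∀ s : SignedMeasure E,
      sSup {r : ℝ | ∃ f : BoundedContinuousFunction E ℝ, ‖f‖ ≤ 1 ∧ r = |intSM' s ⇑f|}
        = (s.totalVariation Set.univ).toReal) := by
  refine ⟨intSM'_add, intSM'_smul, ?_, ?_⟩
  · -- injectivity
    intro s t h
    set ps := s.toJordanDecomposition.posPart
    set qs := s.toJordanDecomposition.negPart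
    set pt := t.toJordanDecomposition.posPart
    set qt := t.toJordanDecomposition.negPart
    have hmeas : ps + qt = pt + qs := by
      apply MeasureTheory.ext_of_forall_lintegral_eq_of_IsFiniteMeasure
      intro g
      have hint : ∀ μ : Measure E, IsFiniteMeasure μ →
          (∫⁻ x, (g x : ENNReal) ∂μ).toReal = ∫ x, (nnCoe g) x ∂μ := by
        intro μ hμ
        simpa using BoundedContinuousFunction.toReal_lintegral_coe_eq_integral g μ
      have hEq : ∫ x, (nnCoe g) x ∂(ps + qt) = ∫ x, (nnCoe g) x ∂(pt + qs) := by
        rw [integral_add_measure ((nnCoe g).integrable _) ((nnCoe g).integrable _),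
          integral_add_measure ((nnCoe g).integrable _) ((nnCoe g).integrable _)]
        have := h (nnCoe g)
        rw [intSM'_self, intSM'_self] at this
        linarith
      have h1 := hint (ps + qt) inferInstance
      have h2 := hint (pt + qs) inferInstance
      rw [hEq, ← h2] at h1
      exact (ENNReal.toReal_eq_toReal_iff'
        (ne_of_lt (BoundedContinuousFunction.lintegral_lt_top_of_nnreal _ g))
        (ne_of_lt (BoundedContinuousFunction.lintegral_lt_top_of_nnreal _ g))).mp h1
    have : ps.toSignedMeasure + qt.toSignedMeasure
        = pt.toSignedMeasure + qs.toSignedMeasure := by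
      rw [← Measure.toSignedMeasure_add, ← Measure.toSignedMeasure_add]
      exact MeasureTheory.Measure.toSignedMeasure_congr hmeas
    calc s = ps.toSignedMeasure - qs.toSignedMeasure := signed_decomp s
      _ = pt.toSignedMeasure - qt.toSignedMeasure := by
          rw [sub_eq_sub_iff_add_eq_add]; exact this
      _ = t := (signed_decomp t).symm
  · -- operator norm equals total variation
    intro s
    set S := {r : ℝ | ∃ f : BoundedContinuousFunction E ℝ, ‖f‖ ≤ 1 ∧ r = |intSM' s ⇑f|}
    have hne : S.Nonempty := by
      refine ⟨|intSM' s ⇑(0 : BoundedContinuousFunction E ℝ)|, 0, ?_, rfl⟩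
      simp
    have hub : ∀ r ∈ S, r ≤ (s.totalVariation Set.univ).toReal := by
      rintro r ⟨f, hf, rfl⟩
      exact intSM'_abs_le s f hf
    refine le_antisymm (csSup_le hne hub) ?_
    apply le_of_forall_sub_le
    intro ε hε
    obtain ⟨f, hf, hfe⟩ := intSM'_approx s hε
    have hmem : |intSM' s ⇑f| ∈ S := ⟨f, hf, rfl⟩
    have h1 : intSM' s ⇑f ≤ |intSM' s ⇑f| := le_abs_self _
    have h2 : |intSM' s ⇑f| ≤ sSup S := le_csSup ⟨_, hub⟩ hmem
    linarith
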